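/- Let r_1,...,r_n ∈ R^3 with at least two of them non-collinear, and let γ_1,...,γ_n > 0. Then the matrix W_γ = -∑_{i=1}^n γ_i S(r_i)^2 is symmetric positive definite. -/

import Mathlib

open Matrix

/-- The skew-symmetric (cross-product) matrix map `S : ℝ³ → so(3)`. -/
def skewS (x : Fin 3 → ℝ) : Matrix (Fin 3) (Fin 3) ℝ :=
  !![0, -x 2, x 1; x 2, 0, -x 0; -x 1, x 0, 0]

lemma quad_eq (x y : Fin 3 → ℝ) :
    y ⬝ᵥ (skewS x * skewS x).mulVec y = -(crossProduct x y ⬝ᵥ crossProduct x y) := by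
  simp [skewS, cross_apply, dotProduct, mulVec, Fin.sum_univ_three, Matrix.mul_apply]
  ring

lemma cross_zero_collinear (x y : Fin 3 → ℝ) (hy : y ≠ 0)
    (hx : crossProduct x y = 0) : ∃ c : ℝ, x = c • y := by
  have hx0 := congrFun hx 0; have hx1 := congrFun hx 1; have hx2 := congrFun hx 2
  simp [cross_apply, sub_eq_zero] at hx0 hx1 hx2
  have hy' : y 0 ≠ 0 ∨ y 1 ≠ 0 ∨ y 2 ≠ 0 := by
    by_contra h
    push_neg at h
    exact hy (funext fun i => by fin_cases i <;> simp [h.1, h.2.1, h.2.2])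
  rcases hy' with h | h | h
  · exact ⟨x 0 / y 0, funext fun i => by
      fin_cases i <;> simp [Pi.smul_apply, smul_eq_mul] <;> field_simp <;> linarith⟩
  · exact ⟨x 1 / y 1, funext fun i => by
      fin_cases i <;> simp [Pi.smul_apply, smul_eq_mul] <;> field_simp <;> linarith⟩
  · exact ⟨x 2 / y 2, funext fun i => by
      fin_cases i <;> simp [Pi.smul_apply, smul_eq_mul] <;> field_simp <;> linarith⟩

lemma cross_zero_trans (x z y : Fin 3 → ℝ) (hy : y ≠ 0)
    (hx : crossProduct x y = 0) (hz : crossProduct z y = 0) : crossProduct x z = 0 := by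
  obtain ⟨c, rfl⟩ := cross_zero_collinear x y hy hx
  obtain ⟨c', rfl⟩ := cross_zero_collinear z y hy hz
  simp [cross_self]

lemma dot_self_pos {v : Fin 3 → ℝ} (h : v ≠ 0) : 0 < v ⬝ᵥ v := by
  have h0 : 0 ≤ v ⬝ᵥ v := Finset.sum_nonneg fun _ _ => mul_self_nonneg _
  rcases h0.lt_or_eq with h' | h'
  · exact h'
  · exact absurd (dotProduct_self_eq_zero.mp h'.symm) h

lemma dot_self_nonneg (v : Fin 3 → ℝ) : 0 ≤ v ⬝ᵥ v :=
  Finset.sum_nonneg fun _ _ => mul_self_nonneg _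

lemma dotProduct_sum' {n : ℕ} (y : Fin 3 → ℝ) (v : Fin n → Fin 3 → ℝ) :
    y ⬝ᵥ (∑ i, v i) = ∑ i, y ⬝ᵥ v i := by
  simp only [dotProduct, Finset.sum_apply, Finset.mul_sum]
  rw [Finset.sum_comm]

lemma sum_mulVec' {n : ℕ} (A : Fin n → Matrix (Fin 3) (Fin 3) ℝ) (y : Fin 3 → ℝ) :
    (∑ i, A i) *ᵥ y = ∑ i, A i *ᵥ y := by
  induction (Finset.univ : Finset (Fin n)) using Finset.induction with
  | empty => simp [Matrix.zero_mulVec]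
  | insert _ _ h ih => simp [Finset.sum_insert h, Matrix.add_mulVec, ih]

theorem stmt8 (n : ℕ) (r : Fin n → Fin 3 → ℝ) (γ : Fin n → ℝ) (hγ : ∀ i, 0 < γ i)
    (hnc : ∃ i j, crossProduct (r i) (r j) ≠ 0) :
    (-(∑ i, γ i • (skewS (r i) * skewS (r i))))ᵀ = -(∑ i, γ i • (skewS (r i) * skewS (r i))) ∧
    ∀ y : Fin 3 → ℝ, y ≠ 0 →
      0 < y ⬝ᵥ (-(∑ i, γ i • (skewS (r i) * skewS (r i)))).mulVec y := by
  constructor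
  · have h : ∀ x : Fin 3 → ℝ, (skewS x * skewS x)ᵀ = skewS x * skewS x := by
      intro x
      ext i j
      fin_cases i <;> fin_cases j <;>
        simp [skewS, Matrix.mul_apply, Fin.sum_univ_three, Matrix.transpose_apply] <;> ring
    rw [Matrix.transpose_neg, Matrix.transpose_sum]
    simp [Matrix.transpose_smul, h]
  · intro y hy
    have key : y ⬝ᵥ (-(∑ i, γ i • (skewS (r i) * skewS (r i)))).mulVec y =
        ∑ i, γ i * (crossProduct (r i) y ⬝ᵥ crossProduct (r i) y) := by
      rw [neg_mulVec, dotProduct_neg, sum_mulVec', dotProduct_sum']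
      rw [neg_eq_iff_eq_neg, ← Finset.sum_neg_distrib]
      refine Finset.sum_congr rfl fun i _ => ?_
      rw [smul_mulVec, dotProduct_smul, smul_eq_mul, quad_eq]
      ring
    rw [key]
    obtain ⟨i₀, j₀, hij⟩ := hnc
    have hpos : ∀ i, 0 ≤ γ i * (crossProduct (r i) y ⬝ᵥ crossProduct (r i) y) := fun i =>
      mul_nonneg (hγ i).le (dot_self_nonneg _)
    have hne : crossProduct (r i₀) y ≠ 0 ∨ crossProduct (r j₀) y ≠ 0 := by
      by_contra h
      push_neg at h
      exact hij (cross_zero_trans _ _ _ hy h.1 h.2)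
    have hex : ∃ i, 0 < γ i * (crossProduct (r i) y ⬝ᵥ crossProduct (r i) y) := by
      rcases hne with h | h
      · exact ⟨i₀, mul_pos (hγ i₀) (dot_self_pos h)⟩
      · exact ⟨j₀, mul_pos (hγ j₀) (dot_self_pos h)⟩
    obtain ⟨i, hi⟩ := hex
    calc 0 < γ i * (crossProduct (r i) y ⬝ᵥ crossProduct (r i) y) := hi
      _ ≤ _ := Finset.single_le_sum (fun j _ => hpos j) (Finset.mem_univ i)
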